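/- If z = r e^{iθ} with r > 1 and θ ∈ (-π/2, π/2), and μ : [0,1] → ℝ is continuous, nonnegative, and satisfies μ(α) ≥ c > 0 on (β₀, β) ⊂ (0,1), then |∫₀¹ μ(α) z^α dα| ≥ c·cos(βπ/2)·(r^β - r^{β₀})/ln r. -/

import Mathlib

theorem stmt_4 (μ : ℝ → ℝ) (c β₀ β r θ : ℝ)
    (hμc : ContinuousOn μ (Set.Icc 0 1))
    (hμ0 : ∀ α ∈ Set.Icc (0:ℝ) 1, 0 ≤ μ α)
    (hβ₀ : 0 < β₀) (hββ : β₀ < β) (hβ : β < 1) (hc : 0 < c)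
    (hlow : ∀ α ∈ Set.Ioo β₀ β, c ≤ μ α)
    (hr : 1 < r) (hθ : |θ| < Real.pi / 2) :
    c * Real.cos (β * Real.pi / 2) *
        (Real.exp (β * Real.log r) - Real.exp (β₀ * Real.log r)) / Real.log r
      ≤ ‖∫ α in (0:ℝ)..1,
          (μ α : ℂ) * Complex.exp (α * (Real.log r + θ * Complex.I))‖ := by
  have hL : 0 < Real.log r := Real.log_pos hr
  set L := Real.log r with hLdef
  set f : ℝ → ℝ := fun α => μ α * (Real.exp (α * L) * Real.cos (α * θ)) with hf
  set F : ℝ → ℂ := fun α => (μ α : ℂ) * Complex.exp (α * (L + θ * Complex.I)) with hF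
  have hre : ∀ α : ℝ, (F α).re = f α := by
    intro α
    have : (α : ℂ) * (L + θ * Complex.I) = (α * L : ℝ) + (α * θ : ℝ) * Complex.I := by
      push_cast; ring
    simp [hF, this, Complex.exp_add, Complex.exp_mul_I, hf, Complex.mul_re, Complex.mul_im,
      ← Complex.ofReal_mul, ← Complex.ofReal_exp, ← Complex.ofReal_cos, ← Complex.ofReal_sin]
  -- integrability
  have hFc : ContinuousOn F (Set.Icc 0 1) := by
    apply (Complex.continuous_ofReal.comp_continuousOn hμc).mul
    exact (Continuous.continuousOn (by fun_prop))
  have hFInt : IntervalIntegrable F MeasureTheory.volume 0 1 := by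
    apply ContinuousOn.intervalIntegrable
    rwa [Set.uIcc_of_le (by norm_num)]
  have hfc : ContinuousOn f (Set.Icc 0 1) := by
    apply hμc.mul
    exact (Continuous.continuousOn (by fun_prop))
  have hfInt : ∀ a b : ℝ, 0 ≤ a → b ≤ 1 → a ≤ b →
      IntervalIntegrable f MeasureTheory.volume a b := by
    intro a b ha hb hab
    apply ContinuousOn.intervalIntegrable
    apply hfc.mono
    rw [Set.uIcc_of_le hab]
    exact Set.Icc_subset_Icc ha hb
  -- nonnegativity of f on [0,1]
  have hcospos : ∀ α ∈ Set.Icc (0:ℝ) 1, 0 ≤ Real.cos (α * θ) := by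
    intro α hα
    apply le_of_lt
    apply Real.cos_pos_of_mem_Ioo
    constructor
    · have : |α * θ| < Real.pi / 2 := by
        rw [abs_mul, abs_of_nonneg hα.1]
        calc α * |θ| ≤ 1 * |θ| := by
              apply mul_le_mul_of_nonneg_right hα.2 (abs_nonneg θ)
          _ = |θ| := one_mul _
          _ < Real.pi / 2 := hθ
      linarith [neg_abs_le (α * θ), abs_nonneg (α * θ)]
    · calc α * θ ≤ |α * θ| := le_abs_self _
        _ < Real.pi / 2 := by
          rw [abs_mul, abs_of_nonneg hα.1]
          calc α * |θ| ≤ 1 * |θ| := mul_le_mul_of_nonneg_right hα.2 (abs_nonneg θ)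
            _ = |θ| := one_mul _
            _ < Real.pi / 2 := hθ
  have hfnonneg : ∀ α ∈ Set.Icc (0:ℝ) 1, 0 ≤ f α := by
    intro α hα
    exact mul_nonneg (hμ0 α hα)
      (mul_nonneg (Real.exp_nonneg _) (hcospos α hα))
  set g : ℝ → ℝ := fun α => c * Real.cos (β * Real.pi / 2) * Real.exp (α * L) with hg
  -- pointwise bound on Ioo β₀ β
  have hpoint : ∀ α ∈ Set.Ioo β₀ β, g α ≤ f α := by
    intro α hα
    have hα0 : 0 < α := lt_trans hβ₀ hα.1
    have hx : |α * θ| ≤ β * Real.pi / 2 := by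
      rw [abs_mul, abs_of_nonneg hα0.le]
      have h1 : α * |θ| ≤ β * (Real.pi / 2) :=
        mul_le_mul hα.2.le hθ.le (abs_nonneg θ) (by linarith)
      linarith
    have hy : β * Real.pi / 2 ≤ Real.pi := by nlinarith [Real.pi_pos]
    have hcos : Real.cos (β * Real.pi / 2) ≤ Real.cos (α * θ) := by
      rw [← Real.cos_abs (α * θ)]
      exact Real.cos_le_cos_of_nonneg_of_le_pi (abs_nonneg _) hy hx
    have hcosβ : 0 ≤ Real.cos (β * Real.pi / 2) := by
      apply Real.cos_nonneg_of_mem_Icc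
      constructor <;> nlinarith [Real.pi_pos]
    have h1 : c * Real.cos (β * Real.pi / 2) ≤ μ α * Real.cos (α * θ) :=
      mul_le_mul (hlow α hα) hcos hcosβ (le_trans hc.le (hlow α hα))
    have h2 : (c * Real.cos (β * Real.pi / 2)) * Real.exp (α * L)
        ≤ (μ α * Real.cos (α * θ)) * Real.exp (α * L) :=
      mul_le_mul_of_nonneg_right h1 (Real.exp_nonneg _)
    show c * Real.cos (β * Real.pi / 2) * Real.exp (α * L)
        ≤ μ α * (Real.exp (α * L) * Real.cos (α * θ))
    calc c * Real.cos (β * Real.pi / 2) * Real.exp (α * L)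
        ≤ (μ α * Real.cos (α * θ)) * Real.exp (α * L) := h2
      _ = μ α * (Real.exp (α * L) * Real.cos (α * θ)) := by ring
  -- integral of g
  have hgint : ∫ α in β₀..β, g α =
      c * Real.cos (β * Real.pi / 2) * (Real.exp (β * L) - Real.exp (β₀ * L)) / L := by
    simp only [hg]
    rw [intervalIntegral.integral_const_mul]
    rw [intervalIntegral.integral_comp_mul_right Real.exp (ne_of_gt hL)]
    rw [integral_exp]
    field_simp
    rw [smul_eq_mul, one_div, mul_assoc, mul_inv_cancel_left₀ (ne_of_gt hL)]
  -- g ≤ f a.e. on restrict Icc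
  have hmono : ∫ α in β₀..β, g α ≤ ∫ α in β₀..β, f α := by
    apply intervalIntegral.integral_mono_ae_restrict hββ.le
    · apply ContinuousOn.intervalIntegrable
      exact Continuous.continuousOn (by fun_prop)
    · exact hfInt β₀ β hβ₀.le hβ.le hββ.le
    · rw [← MeasureTheory.Measure.restrict_congr_set MeasureTheory.Ioo_ae_eq_Icc]
      filter_upwards [MeasureTheory.ae_restrict_mem measurableSet_Ioo] with x hx
        using hpoint x hx
  -- splitting
  have hsplit : ∫ α in β₀..β, f α ≤ ∫ α in (0:ℝ)..1, f α := by
    have h1 : (∫ α in (0:ℝ)..β₀, f α) + ∫ α in β₀..β, f α = ∫ α in (0:ℝ)..β, f α :=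
      intervalIntegral.integral_add_adjacent_intervals
        (hfInt 0 β₀ le_rfl (by linarith) hβ₀.le) (hfInt β₀ β hβ₀.le hβ.le hββ.le)
    have h2 : (∫ α in (0:ℝ)..β, f α) + ∫ α in β..1, f α = ∫ α in (0:ℝ)..1, f α :=
      intervalIntegral.integral_add_adjacent_intervals
        (hfInt 0 β le_rfl hβ.le (by linarith)) (hfInt β 1 (by linarith) le_rfl hβ.le)
    have hn1 : 0 ≤ ∫ α in (0:ℝ)..β₀, f α := by
      apply intervalIntegral.integral_nonneg hβ₀.le
      intro u hu
      exact hfnonneg u ⟨hu.1, by linarith [hu.2]⟩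
    have hn2 : 0 ≤ ∫ α in β..1, f α := by
      apply intervalIntegral.integral_nonneg hβ.le
      intro u hu
      exact hfnonneg u ⟨by linarith [hu.1], hu.2⟩
    linarith
  -- re of integral
  have hre_int : (∫ α in (0:ℝ)..1, F α).re = ∫ α in (0:ℝ)..1, f α := by
    have := (Complex.reCLM.intervalIntegral_comp_comm hFInt).symm
    simp only [Complex.reCLM_apply] at this
    rw [this]
    congr 1
    ext α
    exact hre α
  calc c * Real.cos (β * Real.pi / 2) * (Real.exp (β * L) - Real.exp (β₀ * L)) / L
      = ∫ α in β₀..β, g α := hgint.symm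
    _ ≤ ∫ α in β₀..β, f α := hmono
    _ ≤ ∫ α in (0:ℝ)..1, f α := hsplit
    _ = (∫ α in (0:ℝ)..1, F α).re := hre_int.symm
    _ ≤ ‖∫ α in (0:ℝ)..1, F α‖ := Complex.re_le_norm _
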